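/- arXiv:2211.14482 — 2 statements merged into one kernel-verified Lean document; each statement's English description precedes it below -/
import Mathlib

section
/- In any partition of the L × L grid of cells into exactly two edge-connected regions (grey and white), at least one of the two regions is simply connected, i.e., its complement within the grid together with the exterior is connected (equivalently, at least one region has no holes). -/
open Filter Topology

/-- Nearest-neighbour adjacency on the square lattice `ℤ × ℤ`. -/
def latticeGraph : SimpleGraph (ℤ × ℤ) where
  Adj a b := (a.1 = b.1 ∧ (a.2 = b.2 + 1 ∨ b.2 = a.2 + 1)) ∨
             (a.2 = b.2 ∧ (a.1 = b.1 + 1 ∨ b.1 = a.1 + 1))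
  symm := by
    constructor
    intro a b h
    rcases h with ⟨h1, h2⟩ | ⟨h1, h2⟩
    · exact Or.inl ⟨h1.symm, h2.symm⟩
    · exact Or.inr ⟨h1.symm, h2.symm⟩
  loopless := by
    constructor
    intro a h
    rcases h with ⟨-, h | h⟩ | ⟨-, h | h⟩ <;> omega

/-- The cells of an `L × L` grid, identified with their lower-left corners. -/
def cellBox (L : ℕ) : Set (ℤ × ℤ) := {p | 0 ≤ p.1 ∧ p.1 < L ∧ 0 ≤ p.2 ∧ p.2 < L}

/-- A set of cells is connected under edge-adjacency. -/
def regionConnected (A : Set (ℤ × ℤ)) : Prop := (latticeGraph.induce A).Connected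

/-- Reachability by a path of adjacent cells staying inside the set `S`. -/
def reachIn (S : Set (ℤ × ℤ)) : ℤ × ℤ → ℤ × ℤ → Prop :=
  Relation.ReflTransGen (fun a b => latticeGraph.Adj a b ∧ a ∈ S ∧ b ∈ S)

/-- A cell of the `L × L` grid lying on the boundary of the square. -/
def touchesBoundary (L : ℕ) (p : ℤ × ℤ) : Prop :=
  p.1 = 0 ∨ p.1 = (L : ℤ) - 1 ∨ p.2 = 0 ∨ p.2 = (L : ℤ) - 1

/-- A region `R` in the `L × L` grid has a hole if the complement of `R` within the grid
has a connected component that does not touch the boundary of the square. -/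
def hasHole (L : ℕ) (R : Set (ℤ × ℤ)) : Prop :=
  ∃ c ∈ cellBox L \ R, ∀ c' ∈ cellBox L \ R,
    reachIn (cellBox L \ R) c c' → ¬ touchesBoundary L c'

lemma reach_of_connected {S : Set (ℤ × ℤ)} (h : regionConnected S)
    {c c' : ℤ × ℤ} (hc : c ∈ S) (hc' : c' ∈ S) : reachIn S c c' := by
  suffices h' : ∀ (u v : ↥S), (latticeGraph.induce S).Walk u v → reachIn S u.1 v.1 by
    obtain ⟨w⟩ := h.preconnected ⟨c, hc⟩ ⟨c', hc'⟩
    exact h' _ _ w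
  intro u v w
  induction w with
  | nil => exact Relation.ReflTransGen.refl
  | @cons u v _ hadj _ ih =>
      exact Relation.ReflTransGen.head ⟨hadj, u.2, v.2⟩ ih

/-- In any partition of the `L × L` grid of cells into exactly two
connected regions, at least one of the two regions has no holes (is simply connected). -/
theorem one_region_simply_connected (L : ℕ) (A B : Set (ℤ × ℤ))
    (hA : A.Nonempty) (hB : B.Nonempty)
    (hAc : regionConnected A) (hBc : regionConnected B)
    (hdisj : Disjoint A B) (hcover : A ∪ B = cellBox L) :
    ¬ hasHole L A ∨ ¬ hasHole L B := by
  have hAsub : A ⊆ cellBox L := hcover ▸ Set.subset_union_left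
  have hBsub : B ⊆ cellBox L := hcover ▸ Set.subset_union_right
  have hcA : cellBox L \ A = B := by
    ext p
    constructor
    · rintro ⟨hp, hpA⟩
      rcases (hcover ▸ hp : p ∈ A ∪ B) with h | h
      · exact absurd h hpA
      · exact h
    · intro hp
      exact ⟨hBsub hp, fun hpA => hdisj.ne_of_mem hpA hp rfl⟩
  have hcB : cellBox L \ B = A := by
    ext p
    constructor
    · rintro ⟨hp, hpB⟩
      rcases (hcover ▸ hp : p ∈ A ∪ B) with h | h
      · exact h
      · exact absurd h hpB
    · intro hp
      exact ⟨hAsub hp, fun hpB => hdisj.ne_of_mem hp hpB rfl⟩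
  by_contra hcon
  push_neg at hcon
  obtain ⟨hHA, hHB⟩ := hcon
  rw [hasHole] at hHA hHB
  rw [hcA] at hHA
  rw [hcB] at hHB
  obtain ⟨cb, hcb, hnb⟩ := hHA
  obtain ⟨ca, hca, hna⟩ := hHB
  -- every cell of B avoids boundary, every cell of A avoids boundary
  have hBavoid : ∀ p ∈ B, ¬ touchesBoundary L p := fun p hp =>
    hnb p hp (reach_of_connected hBc hcb hp)
  have hAavoid : ∀ p ∈ A, ¬ touchesBoundary L p := fun p hp =>
    hna p hp (reach_of_connected hAc hca hp)
  -- L ≥ 1 since A nonempty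
  obtain ⟨a, ha⟩ := hA
  have haBox := hAsub ha
  have hL : 1 ≤ L := by
    by_contra h
    have : L = 0 := by omega
    subst this
    obtain ⟨h1, h2, _⟩ := haBox
    simp at h2
    omega
  -- (0,0) is a boundary cell of the grid
  have h00 : ((0 : ℤ), (0 : ℤ)) ∈ cellBox L := by
    refine ⟨le_refl _, ?_, le_refl _, ?_⟩ <;>
      · show (0 : ℤ) < (L : ℤ); exact_mod_cast hL
  have htb : touchesBoundary L ((0 : ℤ), (0 : ℤ)) := Or.inl rfl
  rcases (hcover ▸ h00 : ((0:ℤ),(0:ℤ)) ∈ A ∪ B) with h | h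
  · exact hAavoid _ h htb
  · exact hBavoid _ h htb
end

section
/- For every L ≥ 1, P_{L+1}(1) ≥ C_L(1), where C_L(1) is the number of self-avoiding walks from (0,0) to (L,L) in the L × L grid graph and P_L(1) is the number of self-avoiding polygons crossing the L × L square (simple cycles in the (L+1) × (L+1) vertex grid that visit both a vertex with x-coordinate 0 and a vertex with x-coordinate L). -/
open Filter Topology

/-- The vertices `{0,…,L} × {0,…,L}` of the `L × L` grid graph. -/
def vtxBox (L : ℕ) : Set (ℤ × ℤ) := {p | 0 ≤ p.1 ∧ p.1 ≤ L ∧ 0 ≤ p.2 ∧ p.2 ≤ L}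

/-- The `L × L` grid graph on vertex set `{0,…,L}²`, with unit-distance edges. -/
def boxGraph (L : ℕ) : SimpleGraph (ℤ × ℤ) where
  Adj a b := latticeGraph.Adj a b ∧ a ∈ vtxBox L ∧ b ∈ vtxBox L
  symm := by
    constructor
    rintro a b ⟨h1, h2, h3⟩
    exact ⟨latticeGraph.adj_symm h1, h3, h2⟩
  loopless := by
    constructor
    rintro a ⟨h, -, -⟩
    exact latticeGraph.loopless.irrefl a h

/-- Number of self-avoiding walks crossing the `L × L` square, from `(0,0)` to `(L,L)`. -/
noncomputable def numCrossingWalks (L : ℕ) : ℕ :=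
  Nat.card {w : (boxGraph L).Walk (0, 0) ((L : ℤ), (L : ℤ)) // w.IsPath}

/-- Number of self-avoiding polygons crossing the `L × L` square: simple cycles visiting
both a vertex with `x = 0` and a vertex with `x = L`, counted as edge sets. -/
noncomputable def numCrossingPolygons (L : ℕ) : ℕ :=
  Nat.card {s : Set (Sym2 (ℤ × ℤ)) //
    ∃ (v : ℤ × ℤ) (w : (boxGraph L).Walk v v), w.IsCycle ∧ {e | e ∈ w.edges} = s ∧
      (∃ a ∈ w.support, a.1 = 0) ∧ (∃ b ∈ w.support, b.1 = (L : ℤ))}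


open SimpleGraph

section AuxPolygon

lemma box_adj_vert {K : ℕ} {x y y' : ℤ} (h : y' = y + 1) (hx : 0 ≤ x ∧ x ≤ K)
    (hy : 0 ≤ y ∧ y + 1 ≤ K) : (boxGraph K).Adj (x, y') (x, y) := by
  subst h
  exact ⟨Or.inl ⟨rfl, Or.inl rfl⟩, ⟨hx.1, hx.2, by omega, hy.2⟩, ⟨hx.1, hx.2, hy.1, by omega⟩⟩

lemma box_adj_horiz {K : ℕ} {x y x' : ℤ} (h : x' = x + 1) (hy : 0 ≤ y ∧ y ≤ K)
    (hx : 0 ≤ x ∧ x + 1 ≤ K) : (boxGraph K).Adj (x', y) (x, y) := by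
  subst h
  exact ⟨Or.inr ⟨rfl, Or.inl rfl⟩, ⟨by omega, hx.2, hy.1, hy.2⟩, ⟨hx.1, by omega, hy.1, hy.2⟩⟩

/-- Vertical walk from `(x, n)` down to `(x, 0)`. -/
def vWalk (K : ℕ) (x : ℤ) (hx : 0 ≤ x ∧ x ≤ K) :
    (n : ℕ) → ((n : ℤ) ≤ K) → (boxGraph K).Walk (x, (n : ℤ)) (x, 0)
  | 0, _ => Walk.nil.copy (by norm_num) rfl
  | n+1, hn => Walk.cons
      (box_adj_vert (by push_cast; ring) hx ⟨by positivity, by push_cast at hn ⊢; omega⟩)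
      (vWalk K x hx n (by push_cast at hn ⊢; omega))

/-- Horizontal walk from `(n, y)` left to `(0, y)`. -/
def hWalk (K : ℕ) (y : ℤ) (hy : 0 ≤ y ∧ y ≤ K) :
    (n : ℕ) → ((n : ℤ) ≤ K) → (boxGraph K).Walk ((n : ℤ), y) (0, y)
  | 0, _ => Walk.nil.copy (by norm_num) rfl
  | n+1, hn => Walk.cons
      (box_adj_horiz (by push_cast; ring) hy ⟨by positivity, by push_cast at hn ⊢; omega⟩)
      (hWalk K y hy n (by push_cast at hn ⊢; omega))

lemma vWalk_support (K : ℕ) (x : ℤ) (hx : 0 ≤ x ∧ x ≤ K) :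
    ∀ n hn, ∀ p ∈ (vWalk K x hx n hn).support, p.1 = x ∧ 0 ≤ p.2 ∧ p.2 ≤ n
  | 0, hn => by simp [vWalk]
  | n+1, hn => by
    intro p hp
    rw [vWalk, Walk.support_cons, List.mem_cons] at hp
    rcases hp with rfl | hp
    · refine ⟨rfl, by positivity, le_refl _⟩
    · have := vWalk_support K x hx n _ p hp
      exact ⟨this.1, this.2.1, by push_cast at this ⊢; omega⟩

lemma hWalk_support (K : ℕ) (y : ℤ) (hy : 0 ≤ y ∧ y ≤ K) :
    ∀ n hn, ∀ p ∈ (hWalk K y hy n hn).support, p.2 = y ∧ 0 ≤ p.1 ∧ p.1 ≤ n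
  | 0, hn => by simp [hWalk]
  | n+1, hn => by
    intro p hp
    rw [hWalk, Walk.support_cons, List.mem_cons] at hp
    rcases hp with rfl | hp
    · refine ⟨rfl, by positivity, le_refl _⟩
    · have := hWalk_support K y hy n _ p hp
      exact ⟨this.1, this.2.1, by push_cast at this ⊢; omega⟩

lemma vWalk_support_nodup (K : ℕ) (x : ℤ) (hx : 0 ≤ x ∧ x ≤ K) :
    ∀ n hn, (vWalk K x hx n hn).support.Nodup
  | 0, hn => by simp [vWalk]
  | n+1, hn => by
    rw [vWalk, Walk.support_cons, List.nodup_cons]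
    refine ⟨fun hmem => ?_, vWalk_support_nodup K x hx n _⟩
    have := (vWalk_support K x hx n _ _ hmem).2.2
    push_cast at this; omega

lemma hWalk_support_nodup (K : ℕ) (y : ℤ) (hy : 0 ≤ y ∧ y ≤ K) :
    ∀ n hn, (hWalk K y hy n hn).support.Nodup
  | 0, hn => by simp [hWalk]
  | n+1, hn => by
    rw [hWalk, Walk.support_cons, List.nodup_cons]
    refine ⟨fun hmem => ?_, hWalk_support_nodup K y hy n _⟩
    have := (hWalk_support K y hy n _ _ hmem).2.2
    push_cast at this; omega

lemma hWalk_support_tail (K : ℕ) (y : ℤ) (hy : 0 ≤ y ∧ y ≤ K) :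
    ∀ n hn, ∀ p ∈ (hWalk K y hy n hn).support.tail, p.2 = y ∧ 0 ≤ p.1 ∧ p.1 < n
  | 0, hn => by simp [hWalk]
  | n+1, hn => by
    intro p hp
    rw [hWalk, Walk.support_cons, List.tail_cons] at hp
    have := hWalk_support K y hy n _ p hp
    exact ⟨this.1, this.2.1, by push_cast at this ⊢; omega⟩

lemma vWalk_edges (K : ℕ) (x : ℤ) (hx : 0 ≤ x ∧ x ≤ K) :
    ∀ n hn, ∀ e ∈ (vWalk K x hx n hn).edges, ∀ v ∈ e, v.1 = x
  | 0, hn => by simp [vWalk]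
  | n+1, hn => by
    intro e he v hv
    rw [vWalk, Walk.edges_cons, List.mem_cons] at he
    rcases he with rfl | he
    · rcases Sym2.mem_iff.mp hv with rfl | rfl <;> rfl
    · exact vWalk_edges K x hx n _ e he v hv

lemma hWalk_edges (K : ℕ) (y : ℤ) (hy : 0 ≤ y ∧ y ≤ K) :
    ∀ n hn, ∀ e ∈ (hWalk K y hy n hn).edges, ∀ v ∈ e, v.2 = y
  | 0, hn => by simp [hWalk]
  | n+1, hn => by
    intro e he v hv
    rw [hWalk, Walk.edges_cons, List.mem_cons] at he
    rcases he with rfl | he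
    · rcases Sym2.mem_iff.mp hv with rfl | rfl <;> rfl
    · exact hWalk_edges K y hy n _ e he v hv
/-- The boundary walk from `(L, L+1)` to `(0,0)` going right, down, and left. -/
def bWalk (L : ℕ) : (boxGraph (L+1)).Walk ((L : ℤ), ((L+1 : ℕ) : ℤ)) ((0 : ℤ), (0 : ℤ)) :=
  Walk.cons
    ((boxGraph (L+1)).adj_symm (box_adj_horiz (by push_cast; ring) ⟨by positivity, le_refl _⟩
      ⟨by positivity, by push_cast; omega⟩))
    ((vWalk (L+1) ((L+1 : ℕ) : ℤ) ⟨by positivity, le_refl _⟩ (L+1) (le_refl _)).append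
      (hWalk (L+1) 0 ⟨le_refl _, by positivity⟩ (L+1) (le_refl _)))

lemma bWalk_support (L : ℕ) :
    ∀ p ∈ (bWalk L).support,
      p = ((L : ℤ), ((L+1 : ℕ) : ℤ)) ∨ (p.1 = ((L+1 : ℕ) : ℤ) ∧ 0 ≤ p.2 ∧ p.2 ≤ ((L+1:ℕ):ℤ))
        ∨ (p.2 = 0 ∧ 0 ≤ p.1 ∧ p.1 ≤ ((L+1:ℕ):ℤ)) := by
  intro p hp
  rw [bWalk, Walk.support_cons, List.mem_cons] at hp
  rcases hp with rfl | hp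
  · exact Or.inl rfl
  rw [Walk.mem_support_append_iff] at hp
  rcases hp with hp | hp
  · have := vWalk_support _ _ _ _ _ p hp
    exact Or.inr (Or.inl ⟨this.1, this.2⟩)
  · have := hWalk_support _ _ _ _ _ p hp
    exact Or.inr (Or.inr ⟨this.1, this.2⟩)

lemma bWalk_isPath (L : ℕ) : (bWalk L).IsPath := by
  rw [Walk.isPath_def, bWalk, Walk.support_cons, Walk.support_append, List.nodup_cons]
  constructor
  · intro hmem
    rcases List.mem_append.mp hmem with h | h
    · have := (vWalk_support _ _ _ _ _ _ h).1
      simp only at this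
      push_cast at this; omega
    · have := (hWalk_support_tail _ _ _ _ _ _ h).1
      simp only at this
      push_cast at this; omega
  · rw [List.nodup_append]
    refine ⟨vWalk_support_nodup _ _ _ _ _, (hWalk_support_nodup _ _ _ _ _).tail, ?_⟩
    intro p hp q hq hpq
    subst hpq
    have h1 := (vWalk_support _ _ _ _ _ p hp).1
    have h2 := (hWalk_support_tail _ _ _ _ _ p hq).2.2
    omega

lemma bWalk_edges (L : ℕ) :
    ∀ e ∈ (bWalk L).edges, ∃ v ∈ e, v.1 = ((L+1:ℕ):ℤ) ∨ v.2 = 0 := by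
  intro e he
  rw [bWalk, Walk.edges_cons, List.mem_cons] at he
  rcases he with rfl | he
  · exact ⟨(((L+1:ℕ):ℤ), ((L+1:ℕ):ℤ)), Sym2.mem_mk_right _ _, Or.inl rfl⟩
  rw [Walk.edges_append, List.mem_append] at he
  rcases he with he | he
  · obtain ⟨v, hv⟩ : ∃ v, v ∈ e := ⟨e.out.1, e.out_fst_mem⟩
    exact ⟨v, hv, Or.inl (vWalk_edges _ _ _ _ _ e he v hv)⟩
  · obtain ⟨v, hv⟩ : ∃ v, v ∈ e := ⟨e.out.1, e.out_fst_mem⟩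
    exact ⟨v, hv, Or.inr (hWalk_edges _ _ _ _ _ e he v hv)⟩
lemma support_mem_box {K : ℕ} {u v : ℤ × ℤ} (w : (boxGraph K).Walk u v) :
    ∀ p ∈ w.support, p ∈ vtxBox K ∨ p = v := by
  induction w with
  | nil => intro p hp; right; simpa using hp
  | cons h q ih =>
    intro p hp
    rw [Walk.support_cons, List.mem_cons] at hp
    rcases hp with rfl | hp
    · exact Or.inl h.2.1
    · exact ih p hp

/-- A path is determined by its endpoints and the set of its edges. -/
lemma path_eq_of_edges_eq {V : Type*} {G : SimpleGraph V} {u v : V} (p : G.Walk u v)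
    (hp : p.IsPath) : ∀ q : G.Walk u v, q.IsPath →
    (∀ e, e ∈ p.edges ↔ e ∈ q.edges) → p = q := by
  induction p with
  | nil =>
    intro q hq h
    cases q with
    | nil => rfl
    | cons h' q' =>
      exfalso
      rw [Walk.cons_isPath_iff] at hq
      exact hq.2 q'.end_mem_support
  | @cons u w v h' p' ih =>
    intro q hq hh
    cases q with
    | nil =>
      exfalso
      rw [Walk.cons_isPath_iff] at hp
      exact hp.2 p'.end_mem_support
    | @cons _ w₂ _ h2 q' =>
      rw [Walk.cons_isPath_iff] at hp hq
      have hfirst : s(u, w) ∈ (Walk.cons h2 q').edges := (hh _).mp (by simp)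
      rw [Walk.edges_cons, List.mem_cons] at hfirst
      have hw : w₂ = w := by
        rcases hfirst with heq | hmem
        · rcases Sym2.eq_iff.mp heq with ⟨-, h⟩ | ⟨h1, h2'⟩
          · exact h.symm
          · exact absurd h2'.symm h'.ne
        · exact absurd (Walk.fst_mem_support_of_mem_edges q' hmem) hq.2
      subst hw
      have htail : ∀ e, e ∈ p'.edges ↔ e ∈ q'.edges := by
        intro e
        constructor
        · intro he
          have h3 : e ∈ (Walk.cons h2 q').edges := (hh e).mp (by simp [he])
          rw [Walk.edges_cons, List.mem_cons] at h3
          rcases h3 with rfl | h3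
          · exact absurd (Walk.fst_mem_support_of_mem_edges p' he) hp.2
          · exact h3
        · intro he
          have h3 : e ∈ (Walk.cons h' p').edges := (hh e).mpr (by simp [he])
          rw [Walk.edges_cons, List.mem_cons] at h3
          rcases h3 with rfl | h3
          · exact absurd (Walk.fst_mem_support_of_mem_edges q' he) hq.2
          · exact h3
      rw [ih hp.1 q' hq.1 htail]

lemma vtxBox_finite (K : ℕ) : (vtxBox K).Finite := by
  have h : vtxBox K ⊆ (Set.Icc (0:ℤ) K) ×ˢ (Set.Icc (0:ℤ) K) := by
    rintro p ⟨h1, h2, h3, h4⟩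
    exact ⟨⟨h1, h2⟩, ⟨h3, h4⟩⟩
  exact ((Set.finite_Icc _ _).prod (Set.finite_Icc _ _)).subset h

lemma box_edgeSet_finite (K : ℕ) : (boxGraph K).edgeSet.Finite := by
  have h : (boxGraph K).edgeSet ⊆ Function.uncurry Sym2.mk '' ((vtxBox K) ×ˢ (vtxBox K)) := by
    intro e he
    induction e using Sym2.ind with
    | _ a b =>
      rw [SimpleGraph.mem_edgeSet] at he
      exact ⟨(a, b), ⟨he.2.1, he.2.2⟩, rfl⟩
  exact (((vtxBox_finite K).prod (vtxBox_finite K)).image _).subset h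
def shiftFun (p : ℤ × ℤ) : ℤ × ℤ := (p.1, p.2 + 1)

lemma shiftFun_mem {L : ℕ} {a : ℤ × ℤ} (h : a ∈ vtxBox L) : shiftFun a ∈ vtxBox (L + 1) := by
  obtain ⟨h1, h2, h3, h4⟩ := h
  refine ⟨?_, ?_, ?_, ?_⟩ <;> simp only [shiftFun] <;> push_cast <;> omega

/-- Shift a vertex up by one; a graph homomorphism `boxGraph L → boxGraph (L+1)`. -/
def shiftHom (L : ℕ) : boxGraph L →g boxGraph (L + 1) where
  toFun := shiftFun
  map_rel' := by
    rintro a b ⟨hl, ha, hb⟩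
    refine ⟨?_, shiftFun_mem ha, shiftFun_mem hb⟩
    rcases hl with ⟨h1, h2⟩ | ⟨h1, h2⟩
    · refine Or.inl ⟨?_, ?_⟩ <;> simp only [shiftFun] <;> omega
    · refine Or.inr ⟨?_, ?_⟩ <;> simp only [shiftFun] <;> omega

@[simp] lemma shiftHom_apply (L : ℕ) (p : ℤ × ℤ) : shiftHom L p = (p.1, p.2 + 1) := rfl

lemma shiftHom_injective (L : ℕ) : Function.Injective (shiftHom L) := by
  intro a b h
  simp only [shiftHom_apply, Prod.mk.injEq] at h
  exact Prod.ext h.1 (by omega)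

/-- The shifted walk, with endpoints normalized. -/
def sWalk (L : ℕ) (w : (boxGraph L).Walk ((0:ℤ), (0:ℤ)) ((L:ℤ), (L:ℤ))) :
    (boxGraph (L+1)).Walk ((0:ℤ), (1:ℤ)) ((L:ℤ), ((L+1:ℕ):ℤ)) :=
  (w.map (shiftHom L)).copy (by norm_num) (by push_cast; norm_num)

lemma sWalk_support (L : ℕ) (w : (boxGraph L).Walk ((0:ℤ), (0:ℤ)) ((L:ℤ), (L:ℤ))) :
    ∀ p ∈ (sWalk L w).support, 0 ≤ p.1 ∧ p.1 ≤ (L:ℤ) ∧ 1 ≤ p.2 ∧ p.2 ≤ (L:ℤ) + 1 := by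
  intro p hp
  rw [sWalk, Walk.support_copy, Walk.support_map, List.mem_map] at hp
  obtain ⟨q, hq, rfl⟩ := hp
  have hbox : q ∈ vtxBox L := by
    rcases support_mem_box w q hq with h | rfl
    · exact h
    · exact ⟨by positivity, le_refl _, by positivity, le_refl _⟩
  obtain ⟨h1, h2, h3, h4⟩ := hbox
  refine ⟨?_, ?_, ?_, ?_⟩ <;> simp only [shiftHom_apply] <;> omega

/-- The cycle obtained from a crossing walk by closing it up around the boundary. -/
def theCycle (L : ℕ) (w : (boxGraph L).Walk ((0:ℤ), (0:ℤ)) ((L:ℤ), (L:ℤ))) :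
    (boxGraph (L+1)).Walk ((0:ℤ), (0:ℤ)) ((0:ℤ), (0:ℤ)) :=
  Walk.cons
    ((boxGraph (L+1)).adj_symm (box_adj_vert (by norm_num) ⟨le_refl _, by positivity⟩
      ⟨le_refl _, by push_cast; omega⟩))
    ((sWalk L w).append (bWalk L))

lemma bWalk_support_tail (L : ℕ) :
    ∀ p ∈ (bWalk L).support.tail, p.1 = ((L+1:ℕ):ℤ) ∨ p.2 = 0 := by
  intro p hp
  rw [bWalk, Walk.support_cons, List.tail_cons, Walk.mem_support_append_iff] at hp
  rcases hp with hp | hp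
  · exact Or.inl (vWalk_support _ _ _ _ _ p hp).1
  · exact Or.inr (hWalk_support _ _ _ _ _ p hp).1

lemma hWalk_edges_wit (K : ℕ) (y : ℤ) (hy : 0 ≤ y ∧ y ≤ K) :
    ∀ n hn, ∀ e ∈ (hWalk K y hy n hn).edges, ∃ v ∈ e, v.2 = y ∧ 1 ≤ v.1
  | 0, hn => by simp [hWalk]
  | n+1, hn => by
    intro e he
    rw [hWalk, Walk.edges_cons, List.mem_cons] at he
    rcases he with rfl | he
    · exact ⟨(((n+1:ℕ):ℤ), y), Sym2.mem_mk_left _ _, rfl, by push_cast; omega⟩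
    · exact hWalk_edges_wit K y hy n _ e he

lemma bWalk_edges_wit (L : ℕ) :
    ∀ e ∈ (bWalk L).edges, ∃ v ∈ e, v.1 = ((L+1:ℕ):ℤ) ∨ (v.2 = 0 ∧ 1 ≤ v.1) := by
  intro e he
  rw [bWalk, Walk.edges_cons, List.mem_cons] at he
  rcases he with rfl | he
  · exact ⟨(((L+1:ℕ):ℤ), ((L+1:ℕ):ℤ)), Sym2.mem_mk_right _ _, Or.inl rfl⟩
  rw [Walk.edges_append, List.mem_append] at he
  rcases he with he | he
  · obtain ⟨v, hv⟩ : ∃ v, v ∈ e := ⟨e.out.1, e.out_fst_mem⟩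
    exact ⟨v, hv, Or.inl (vWalk_edges _ _ _ _ _ e he v hv)⟩
  · obtain ⟨v, hv, h1, h2⟩ := hWalk_edges_wit _ _ _ _ _ e he
    exact ⟨v, hv, Or.inr ⟨h1, h2⟩⟩

lemma theCycle_isCycle (L : ℕ) (w : (boxGraph L).Walk ((0:ℤ), (0:ℤ)) ((L:ℤ), (L:ℤ)))
    (hw : w.IsPath) : (theCycle L w).IsCycle := by
  rw [theCycle, Walk.cons_isCycle_iff]
  constructor
  · rw [Walk.isPath_def, Walk.support_append, List.nodup_append]
    refine ⟨?_, ?_, ?_⟩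
    · have h : (sWalk L w).IsPath := by
        rw [sWalk, Walk.isPath_copy]
        exact Walk.map_isPath_of_injective (shiftHom_injective L) hw
      exact h.support_nodup
    · exact (bWalk_isPath L).support_nodup.tail
    · intro p hp q hq hpq
      subst hpq
      have h1 := sWalk_support L w p hp
      rcases bWalk_support_tail L p hq with h | h
      · push_cast at h; omega
      · omega
  · intro hmem
    rw [Walk.edges_append, List.mem_append] at hmem
    rcases hmem with hmem | hmem
    · have h := Walk.fst_mem_support_of_mem_edges _ hmem
      have h2 := (sWalk_support L w _ h).2.2.1
      norm_num at h2
    · obtain ⟨v, hv, h⟩ := bWalk_edges_wit L _ hmem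
      rcases Sym2.mem_iff.mp hv with rfl | rfl
      · rcases h with h | ⟨h1, h2⟩
        · simp only [Prod.fst] at h; push_cast at h; omega
        · simp only [Prod.fst] at h2; omega
      · rcases h with h | ⟨h1, h2⟩
        · simp only [Prod.fst] at h; push_cast at h; omega
        · simp only [Prod.fst] at h2; omega
lemma sWalk_edges_Q (L : ℕ) (w : (boxGraph L).Walk ((0:ℤ), (0:ℤ)) ((L:ℤ), (L:ℤ))) :
    ∀ e ∈ (sWalk L w).edges, ∀ v ∈ e, 1 ≤ v.2 ∧ v.1 ≤ (L:ℤ) := by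
  intro e he v hv
  rw [sWalk, Walk.edges_copy, Walk.edges_map, List.mem_map] at he
  obtain ⟨e', he', rfl⟩ := he
  obtain ⟨u, hu, rfl⟩ := Sym2.mem_map.mp hv
  have hus : u ∈ w.support := by
    induction e' using Sym2.ind with
    | _ a b =>
      rcases Sym2.mem_iff.mp hu with rfl | rfl
      · exact Walk.fst_mem_support_of_mem_edges w he'
      · exact Walk.snd_mem_support_of_mem_edges w he'
  have hbox : u ∈ vtxBox L := by
    rcases support_mem_box w u hus with h | rfl
    · exact h
    · exact ⟨by positivity, le_refl _, by positivity, le_refl _⟩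
  obtain ⟨h1, h2, h3, h4⟩ := hbox
  constructor <;> simp only [shiftHom_apply] <;> omega

lemma cycle_edge_iff (L : ℕ) (w : (boxGraph L).Walk ((0:ℤ), (0:ℤ)) ((L:ℤ), (L:ℤ))) (e : Sym2 (ℤ × ℤ)) :
    e ∈ (sWalk L w).edges ↔
      (e ∈ (theCycle L w).edges ∧ ∀ v ∈ e, 1 ≤ v.2 ∧ v.1 ≤ (L:ℤ)) := by
  constructor
  · intro he
    refine ⟨?_, sWalk_edges_Q L w e he⟩
    rw [theCycle, Walk.edges_cons, Walk.edges_append]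
    exact List.mem_cons.mpr (Or.inr (List.mem_append.mpr (Or.inl he)))
  · rintro ⟨he, hQ⟩
    rw [theCycle, Walk.edges_cons, List.mem_cons, Walk.edges_append, List.mem_append] at he
    rcases he with rfl | he | he
    · have := (hQ ((0:ℤ), (0:ℤ)) (Sym2.mem_mk_left _ _)).1
      omega
    · exact he
    · exfalso
      obtain ⟨v, hv, h⟩ := bWalk_edges_wit L _ he
      have := hQ v hv
      rcases h with h | ⟨h1, h2⟩
      · push_cast at h; omega
      · omega

lemma theCycle_inj (L : ℕ) (w₁ w₂ : (boxGraph L).Walk ((0:ℤ), (0:ℤ)) ((L:ℤ), (L:ℤ)))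
    (hw₁ : w₁.IsPath) (hw₂ : w₂.IsPath)
    (h : {e | e ∈ (theCycle L w₁).edges} = {e | e ∈ (theCycle L w₂).edges}) : w₁ = w₂ := by
  have hset : ∀ e, e ∈ (theCycle L w₁).edges ↔ e ∈ (theCycle L w₂).edges := by
    intro e
    exact Set.ext_iff.mp h e
  have hs : ∀ e, e ∈ (sWalk L w₁).edges ↔ e ∈ (sWalk L w₂).edges := by
    intro e
    rw [cycle_edge_iff, cycle_edge_iff, hset e]
  have hkey : ∀ e, e ∈ w₁.edges ↔ e ∈ w₂.edges := by
    intro e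
    have h1 : e ∈ w₁.edges ↔ Sym2.map (shiftHom L) e ∈ (sWalk L w₁).edges := by
      rw [sWalk, Walk.edges_copy, Walk.edges_map]
      exact (List.mem_map_of_injective (Sym2.map.injective (shiftHom_injective L))).symm
    have h2 : e ∈ w₂.edges ↔ Sym2.map (shiftHom L) e ∈ (sWalk L w₂).edges := by
      rw [sWalk, Walk.edges_copy, Walk.edges_map]
      exact (List.mem_map_of_injective (Sym2.map.injective (shiftHom_injective L))).symm
    rw [h1, h2, hs]
  exact path_eq_of_edges_eq w₁ hw₁ w₂ hw₂ hkey

lemma theCycle_mem_right (L : ℕ) (w : (boxGraph L).Walk ((0:ℤ), (0:ℤ)) ((L:ℤ), (L:ℤ))) :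
    (((L+1:ℕ):ℤ), ((L+1:ℕ):ℤ)) ∈ (theCycle L w).support := by
  rw [theCycle, Walk.support_cons]
  refine List.mem_cons.mpr (Or.inr ?_)
  rw [Walk.mem_support_append_iff]
  right
  rw [bWalk, Walk.support_cons]
  refine List.mem_cons.mpr (Or.inr ?_)
  rw [Walk.mem_support_append_iff]
  exact Or.inl (Walk.start_mem_support _)

end AuxPolygon

/-- For every `L ≥ 1`, `P_{L+1}(1) ≥ C_L(1)`: the number of self-avoiding
walks from `(0,0)` to `(L,L)` in the `L × L` grid is at most the number of self-avoiding
polygons crossing the `(L+1) × (L+1)` square. -/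
theorem crossing_walks_le_crossing_polygons (L : ℕ) (hL : 1 ≤ L) :
    numCrossingWalks L ≤ numCrossingPolygons (L + 1) := by
  classical
  have hsub : ∀ s : {s : Set (Sym2 (ℤ × ℤ)) //
      ∃ (v : ℤ × ℤ) (w : (boxGraph (L+1)).Walk v v), w.IsCycle ∧ {e | e ∈ w.edges} = s ∧
        (∃ a ∈ w.support, a.1 = 0) ∧ (∃ b ∈ w.support, b.1 = ((L+1 : ℕ) : ℤ))},
      s.1 ⊆ (boxGraph (L+1)).edgeSet := by
    rintro ⟨s, v, w, -, rfl, -, -⟩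
    intro e he
    exact w.edges_subset_edgeSet he
  have hfin : Finite {s : Set (Sym2 (ℤ × ℤ)) //
      ∃ (v : ℤ × ℤ) (w : (boxGraph (L+1)).Walk v v), w.IsCycle ∧ {e | e ∈ w.edges} = s ∧
        (∃ a ∈ w.support, a.1 = 0) ∧ (∃ b ∈ w.support, b.1 = ((L+1 : ℕ) : ℤ))} := by
    have hE : {t : Set (Sym2 (ℤ × ℤ)) | t ⊆ (boxGraph (L+1)).edgeSet}.Finite :=
      (box_edgeSet_finite (L+1)).finite_subsets
    have : Finite ↥{t : Set (Sym2 (ℤ × ℤ)) | t ⊆ (boxGraph (L+1)).edgeSet} := hE.to_subtype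
    refine Finite.of_injective
      (fun s => (⟨s.1, hsub s⟩ : ↥{t : Set (Sym2 (ℤ × ℤ)) | t ⊆ (boxGraph (L+1)).edgeSet})) ?_
    intro a b hab
    apply Subtype.ext
    have h2 := congrArg (Subtype.val (p := fun t : Set (Sym2 (ℤ × ℤ)) =>
      t ⊆ (boxGraph (L+1)).edgeSet)) hab
    exact h2
  rw [numCrossingWalks, numCrossingPolygons]
  refine Nat.card_le_card_of_injective
    (fun p => ⟨{e | e ∈ (theCycle L p.1).edges},
      ((0:ℤ), (0:ℤ)), theCycle L p.1, theCycle_isCycle L p.1 p.2, rfl,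
      ⟨((0:ℤ), (0:ℤ)), Walk.start_mem_support _, rfl⟩,
      ⟨(((L+1:ℕ):ℤ), ((L+1:ℕ):ℤ)), theCycle_mem_right L p.1, rfl⟩⟩) ?_
  intro a b hab
  have h : {e | e ∈ (theCycle L a.1).edges} = {e | e ∈ (theCycle L b.1).edges} := by
    exact congrArg Subtype.val hab
  exact Subtype.ext (theCycle_inj L a.1 b.1 a.2 b.2 h)
end
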